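/- Let (Ω,σ) be a topological dynamical system and f continuous with ergodic minimizing value f̄. Assume there exists C ≥ 0 such that Σ_{k=0}^{n-1}(f - f̄)(σ^k(ω)) ≥ -C for all ω ∈ Ω and all n ≥ 1. Then for every ω in the Mather set 𝓜(f) and every n ≥ 1, Σ_{k=0}^{n-1}(f - f̄)(σ^k(ω)) ≤ C. -/

import Mathlib

open MeasureTheory Filter Topology

noncomputable section

variable {Ω : Type*}

/-- `μ` is a `σ`-invariant Borel probability measure. -/
def IsInvProb [MeasurableSpace Ω] (σ : Ω → Ω) (μ : Measure Ω) : Prop :=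
  IsProbabilityMeasure μ ∧ Measure.map σ μ = μ

/-- Birkhoff sum `∑_{k=0}^{n-1} g(σ^k ω)`. -/
def birk (σ : Ω → Ω) (g : Ω → ℝ) (n : ℕ) (ω : Ω) : ℝ :=
  ∑ k ∈ Finset.range n, g (σ^[k] ω)

/-- The transfer function `u(ω) = - inf_{n ≥ 1} ∑_{k=0}^{n-1} (f - f̄)(σ^k ω)`. -/
def uFn (σ : Ω → Ω) (f : Ω → ℝ) (fbar : ℝ) (ω : Ω) : ℝ :=
  -(⨅ n : ℕ, birk σ (fun x => f x - fbar) (n + 1) ω)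

/-- The support of a measure: points all of whose open neighborhoods have positive measure. -/
def msupport [TopologicalSpace Ω] [MeasurableSpace Ω] (μ : Measure Ω) : Set Ω :=
  {ω | ∀ U : Set Ω, IsOpen U → ω ∈ U → 0 < μ U}

/-- `μ` is a minimizing measure for `f` with ergodic minimizing value `fbar`. -/
def IsMinimizing [MeasurableSpace Ω] (σ : Ω → Ω) (f : Ω → ℝ) (fbar : ℝ)
    (μ : Measure Ω) : Prop :=
  IsInvProb σ μ ∧ ∫ x, f x ∂μ = fbar

/-- The Mather set: union of supports of minimizing measures. -/
def MatherSet [TopologicalSpace Ω] [MeasurableSpace Ω] (σ : Ω → Ω) (f : Ω → ℝ)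
    (fbar : ℝ) : Set Ω :=
  {ω | ∃ μ : Measure Ω, IsMinimizing σ f fbar μ ∧ ω ∈ msupport μ}

/-- `fbar` is the minimum of `∫ f dμ` over invariant probability measures. -/
def IsErgMinValue [MeasurableSpace Ω] (σ : Ω → Ω) (f : Ω → ℝ) (fbar : ℝ) : Prop :=
  IsLeast {x : ℝ | ∃ μ : Measure Ω, IsInvProb σ μ ∧ ∫ w, f w ∂μ = x} fbar

section Aux

variable [MetricSpace Ω] [CompactSpace Ω] [MeasurableSpace Ω] [BorelSpace Ω]

lemma birk_succ' (σ : Ω → Ω) (g : Ω → ℝ) (m : ℕ) (ω : Ω) :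
    birk σ g (m + 1) ω = g ω + birk σ g m (σ ω) := by
  unfold birk
  rw [Finset.sum_range_succ']
  simp [Function.iterate_succ_apply, add_comm]

lemma aux_integrable {μ : Measure Ω} [IsProbabilityMeasure μ] {u : Ω → ℝ} {M : ℝ}
    (hm : Measurable u) (hb : ∀ x, |u x| ≤ M) : Integrable u μ :=
  (integrable_const M).mono' hm.aestronglyMeasurable (Filter.Eventually.of_forall fun x => by
    simpa [Real.norm_eq_abs] using hb x)

end Aux

/-- upper bound `C` on Birkhoff sums of `f - f̄` on the Mather set. -/
theorem stmt4 [MetricSpace Ω] [CompactSpace Ω] [MeasurableSpace Ω] [BorelSpace Ω]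
    (σ : Ω → Ω) (hσ : Continuous σ) (f : Ω → ℝ) (hf : Continuous f) (fbar : ℝ)
    (hfbar : IsErgMinValue σ f fbar) (C : ℝ) (hC : 0 ≤ C)
    (hlow : ∀ ω : Ω, ∀ n : ℕ, 1 ≤ n → birk σ (fun x => f x - fbar) n ω ≥ -C) :
    ∀ ω ∈ MatherSet σ f fbar, ∀ n : ℕ, 1 ≤ n →
      birk σ (fun x => f x - fbar) n ω ≤ C := by
  intro ω₀ hω₀ n hn
  obtain ⟨μ, ⟨⟨hprob, hinv⟩, hintf⟩, hsupp⟩ := hω₀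
  haveI := hprob
  set g : Ω → ℝ := fun x => f x - fbar with hg
  have hgc : Continuous g := hf.sub continuous_const
  have hbc : ∀ m : ℕ, Continuous (birk σ g m) := fun m => by
    unfold birk
    exact continuous_finset_sum _ fun k _ => hgc.comp (hσ.iterate k)
  have hbdd : ∀ ω : Ω, BddBelow (Set.range fun m : ℕ => birk σ g (m + 1) ω) := fun ω =>
    ⟨-C, by rintro x ⟨m, rfl⟩; exact hlow ω (m + 1) m.succ_pos⟩
  set u : Ω → ℝ := fun ω => -(⨅ m : ℕ, birk σ g (m + 1) ω) with hu
  have humeas : Measurable u :=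
    (Measurable.iInf fun m => (hbc (m + 1)).measurable).neg
  have huC : ∀ ω, u ω ≤ C := fun ω => by
    have : -C ≤ ⨅ m : ℕ, birk σ g (m + 1) ω :=
      le_ciInf fun m => hlow ω (m + 1) m.succ_pos
    simp only [hu, neg_le]
    linarith
  have hulb : ∀ ω, -(g ω) ≤ u ω := fun ω => by
    have h1 : (⨅ m : ℕ, birk σ g (m + 1) ω) ≤ birk σ g 1 ω := ciInf_le (hbdd ω) 0
    have h2 : birk σ g 1 ω = g ω := by simp [birk]
    simp only [hu, neg_le_neg_iff, ← h2] at *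
    linarith
  -- bound on g
  obtain ⟨M, hM⟩ : ∃ M : ℝ, ∀ x, |g x| ≤ M := by
    obtain ⟨M, hM⟩ := (isCompact_range (hgc.abs)).bddAbove
    exact ⟨M, fun x => hM ⟨x, rfl⟩⟩
  have huB : ∀ x, |u x| ≤ max C M := by
    intro x
    have h1 := hulb x
    have h2 := (abs_le.mp (hM x)).2
    rw [abs_le]
    refine ⟨le_trans (neg_le_neg (le_max_right C M)) (by linarith), (huC x).trans (le_max_left _ _)⟩
  have hσm : Measurable σ := hσ.measurable
  -- integrabilities
  have hui : Integrable u μ := aux_integrable humeas huB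
  have husi : Integrable (fun ω => u (σ ω)) μ :=
    aux_integrable (humeas.comp hσm) fun x => huB (σ x)
  have hgi : Integrable g μ := aux_integrable hgc.measurable hM
  -- the function h = g + u - u ∘ σ
  set h : Ω → ℝ := fun ω => g ω + u ω - u (σ ω) with hh
  have hhm : Measurable h := ((hgc.measurable.add humeas).sub (humeas.comp hσm))
  have hhnn : ∀ ω, 0 ≤ h ω := fun ω => by
    have key : (⨅ m : ℕ, birk σ g (m + 1) ω) - g ω ≤ ⨅ m : ℕ, birk σ g (m + 1) (σ ω) := by
      refine le_ciInf fun m => ?_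
      have h4 := ciInf_le (hbdd ω) (m + 1)
      rw [birk_succ' σ g (m + 1) ω] at h4
      linarith
    simp only [hh, hu]
    linarith
  have hint_us : ∫ ω, u (σ ω) ∂μ = ∫ ω, u ω ∂μ := by
    conv_rhs => rw [← hinv]
    exact (integral_map hσm.aemeasurable (humeas.aestronglyMeasurable.mono_ac
      (Measure.absolutelyContinuous_refl _))).symm
  have hintg : ∫ ω, g ω ∂μ = 0 := by
    have hfi : Integrable f μ := by
      obtain ⟨Mf, hMf⟩ := (isCompact_range hf.abs).bddAbove
      exact aux_integrable hf.measurable fun x => hMf ⟨x, rfl⟩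
    simp only [hg]
    rw [integral_sub hfi (integrable_const fbar), hintf, integral_const]
    simp
  have hinth : ∫ ω, h ω ∂μ = 0 := by
    simp only [hh]
    have e1 : ∫ ω, (g ω + u ω) - u (σ ω) ∂μ = (∫ ω, g ω + u ω ∂μ) - ∫ ω, u (σ ω) ∂μ :=
      integral_sub (hgi.add hui) husi
    have e2 : ∫ ω, g ω + u ω ∂μ = (∫ ω, g ω ∂μ) + ∫ ω, u ω ∂μ := integral_add hgi hui
    rw [e1, e2, hint_us, hintg]
    ring
  have hhae : h =ᵐ[μ] 0 :=
    (integral_eq_zero_iff_of_nonneg hhnn ((hgi.add hui).sub husi)).mp hinth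
  -- good set
  set A : Set Ω := {ω | h ω = 0} with hA
  have hAc : μ Aᶜ = 0 := by
    have := hhae
    rw [Filter.EventuallyEq, ae_iff] at this
    simpa [hA, Set.compl_setOf] using this
  have hAm : MeasurableSet A := hhm (measurableSet_singleton 0)
  have hmapk : ∀ k : ℕ, Measure.map (σ^[k]) μ = μ := by
    intro k
    induction k with
    | zero => simp
    | succ k ih =>
      rw [Function.iterate_succ, ← Measure.map_map (hσm.iterate k) hσm, hinv, ih]
  have hpre : ∀ k : ℕ, ∀ s : Set Ω, MeasurableSet s → μ ((σ^[k]) ⁻¹' s) = μ s := by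
    intro k s hs
    conv_rhs => rw [← hmapk k]
    rw [Measure.map_apply (hσm.iterate k) hs]
  set G : Set Ω := ⋂ k : ℕ, (σ^[k]) ⁻¹' A with hG
  have hGc : μ Gᶜ = 0 := by
    rw [hG, Set.compl_iInter]
    refine measure_iUnion_null fun k => ?_
    rw [← Set.preimage_compl, hpre k Aᶜ hAm.compl]
    exact hAc
  -- telescoping on G
  have htel : ∀ ω ∈ G, ∀ m : ℕ, birk σ g m ω = u (σ^[m] ω) - u ω := by
    intro ω hω m
    have hk : ∀ k : ℕ, g (σ^[k] ω) = u (σ^[k + 1] ω) - u (σ^[k] ω) := by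
      intro k
      have := Set.mem_iInter.mp hω k
      simp only [Set.mem_preimage, hA, Set.mem_setOf_eq, hh] at this
      rw [Function.iterate_succ_apply']
      linarith
    unfold birk
    calc ∑ k ∈ Finset.range m, g (σ^[k] ω)
        = ∑ k ∈ Finset.range m, (u (σ^[k + 1] ω) - u (σ^[k] ω)) := by
          exact Finset.sum_congr rfl fun k _ => hk k
      _ = u (σ^[m] ω) - u (σ^[0] ω) := Finset.sum_range_sub (fun k => u (σ^[k] ω)) m
      _ = u (σ^[m] ω) - u ω := by simp
  -- on G, u (σ ω) ≥ 0
  have hGpos : ∀ ω ∈ G, 0 ≤ u (σ ω) := by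
    intro ω hω
    have h1 : birk σ g 1 ω = u (σ^[1] ω) - u ω := htel ω hω 1
    have h2 : (⨅ m : ℕ, birk σ g (m + 1) ω) ≤ birk σ g 1 ω := ciInf_le (hbdd ω) 0
    have h3 : -u ω ≤ birk σ g 1 ω := by
      simp only [hu, neg_neg] at h2 ⊢
      exact h2
    rw [h1] at h3
    simp only [Function.iterate_one] at h3
    linarith
  set S : Set Ω := {ω | 0 ≤ u ω} with hS
  have hSm : MeasurableSet S := measurableSet_le measurable_const humeas
  have hSc : μ Sᶜ = 0 := by
    have hsub : σ ⁻¹' Sᶜ ⊆ Gᶜ := by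
      intro x hx
      simp only [Set.mem_preimage, Set.mem_compl_iff, hS, Set.mem_setOf_eq, not_le] at hx
      intro hxG
      exact absurd (hGpos x hxG) (not_le.mpr hx)
    have : μ (σ ⁻¹' Sᶜ) = μ Sᶜ := hpre 1 Sᶜ hSm.compl |>.symm ▸ by
      simpa using hpre 1 Sᶜ hSm.compl
    rw [← this]
    exact le_antisymm ((measure_mono hsub).trans hGc.le) zero_le
  -- final set F
  have hFc : μ (G ∩ S)ᶜ = 0 := by
    rw [Set.compl_inter]
    exact le_antisymm ((measure_union_le _ _).trans (by rw [hGc, hSc]; simp)) zero_le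
  have hFbound : ∀ ω ∈ G ∩ S, birk σ g n ω ≤ C := by
    rintro ω ⟨hωG, hωS⟩
    rw [htel ω hωG n]
    have := huC (σ^[n] ω)
    have := hωS
    simp only [hS, Set.mem_setOf_eq] at this
    linarith
  -- conclude by density of full-measure sets in the support
  by_contra hcon
  push_neg at hcon
  set U : Set Ω := (birk σ g n) ⁻¹' Set.Ioi C with hU
  have hUopen : IsOpen U := (hbc n).isOpen_preimage _ isOpen_Ioi
  have hω₀U : ω₀ ∈ U := by simpa [hU] using hcon
  have hUpos : 0 < μ U := hsupp U hUopen hω₀U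
  have hUsub : U ⊆ (G ∩ S)ᶜ := by
    intro x hx hxF
    have := hFbound x hxF
    simp only [hU, Set.mem_preimage, Set.mem_Ioi] at hx
    linarith
  exact absurd ((measure_mono hUsub).trans hFc.le) (not_le.mpr hUpos)
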